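/- Let q₀ be a rotationally invariant density on R^d with ∫ y₁² q₀(y) dy < ∞, Σ positive definite, and q(x) = det(Σ)^{-1/2} q₀(Σ^{-1/2} x). Then for any nonzero vector ℓ ∈ R^d, ∫_{{y : ⟨ℓ,y⟩ ≥ 0}} y ⟨ℓ,y⟩ q(y) dy = m₂(q₀) Σℓ, where m₂(q₀) = ∫ y₁² 1{y₁ ≥ 0} q₀(y) dy > 0. -/

import Mathlib

open MeasureTheory Matrix

lemma my_cov {d : ℕ} {F : Type*} [NormedAddCommGroup F] [NormedSpace ℝ F] [CompleteSpace F]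
    (T : Matrix (Fin d) (Fin d) ℝ) (hT : T.det ≠ 0)
    (f : (Fin d → ℝ) → F) (hf : StronglyMeasurable f)
    (s : Set (Fin d → ℝ)) (hs : MeasurableSet s) :
    ∫ y in s, f y = |T.det| • ∫ z in T.mulVec ⁻¹' s, f (T.mulVec z) := by
  have hmap := Real.map_matrix_volume_pi_eq_smul_volume_pi hT
  have hdet : (0:ℝ) < |T.det| := abs_pos.2 hT
  have hvol : (volume : Measure (Fin d → ℝ)) =
      ENNReal.ofReal |T.det| • Measure.map (toLin' T) volume := by
    rw [hmap, smul_smul, ← ENNReal.ofReal_mul (abs_nonneg _), abs_inv,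
      mul_inv_cancel₀ (ne_of_gt hdet), ENNReal.ofReal_one, one_smul]
  have hmeas : Measurable (toLin' T) := (LinearMap.continuous_on_pi _).measurable
  calc ∫ y in s, f y
      = ∫ y in s, f y ∂(ENNReal.ofReal |T.det| • Measure.map (toLin' T) volume) := by
        rw [← hvol]
    _ = |T.det| • ∫ y in s, f y ∂(Measure.map (toLin' T) volume) := by
        rw [Measure.restrict_smul, integral_smul_measure, ENNReal.toReal_ofReal hdet.le]
    _ = |T.det| • ∫ z in T.mulVec ⁻¹' s, f (T.mulVec z) := by
        have he : ⇑(toLin' T) = T.mulVec := funext fun z => toLin'_apply T z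
        rw [setIntegral_map hs hf.aestronglyMeasurable hmeas.aemeasurable, he]

lemma my_orth {d : ℕ} (i0 : Fin d) (u : Fin d → ℝ) (hu : u ⬝ᵥ u = 1) :
    ∃ U : Matrix (Fin d) (Fin d) ℝ, U * Uᵀ = 1 ∧ U.mulVec (Pi.single i0 1) = u := by
  classical
  set u' : EuclideanSpace ℝ (Fin d) := WithLp.toLp 2 u with hu'
  have hnorm : ‖u'‖ = 1 := by
    rw [EuclideanSpace.norm_eq]
    have : ∑ i, ‖u' i‖ ^ 2 = 1 := by
      rw [← hu]; simp [hu', dotProduct, sq_abs, sq]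
    rw [this, Real.sqrt_one]
  have hcard : Module.finrank ℝ (EuclideanSpace ℝ (Fin d)) = Fintype.card (Fin d) := by
    simp [finrank_euclideanSpace]
  have horth : Orthonormal ℝ (({i0} : Set (Fin d)).restrict (fun _ => u')) := by
    constructor
    · intro i; exact hnorm
    · intro i j hij
      exact absurd (Subtype.ext ((i.2 : i.1 ∈ ({i0} : Set (Fin d))).trans
        (j.2 : j.1 ∈ ({i0} : Set (Fin d))).symm)) hij
  obtain ⟨b, hb⟩ := horth.exists_orthonormalBasis_extension_of_card_eq hcard
  have hbi0 : b i0 = u' := hb i0 rfl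
  refine ⟨Matrix.of (fun i j => b j i), ?_, ?_⟩
  · rw [mul_eq_one_comm]
    ext i j
    have := orthonormal_iff_ite.mp b.orthonormal i j
    rw [PiLp.inner_apply] at this
    simp only [Matrix.mul_apply, Matrix.transpose_apply, Matrix.of_apply, Matrix.one_apply]
    simpa [mul_comm, RCLike.inner_apply, starRingEnd_apply] using this
  · funext i
    rw [mulVec_single]
    simpa using congrArg (fun v => v i) hbi0

theorem stmt11 (d : ℕ) (hd : 0 < d)
    (q₀ : (Fin d → ℝ) → ℝ) (hq₀meas : Measurable q₀)
    (hq₀nonneg : ∀ y, 0 ≤ q₀ y) (hq₀int : (∫ y, q₀ y) = 1)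
    (hrot : ∀ U : Matrix (Fin d) (Fin d) ℝ, U * Uᵀ = 1 →
      ∀ y, q₀ (U.mulVec y) = q₀ y)
    (hmom : Integrable (fun y : Fin d → ℝ => ‖y‖ ^ 2 * q₀ y))
    (S : Matrix (Fin d) (Fin d) ℝ) (hS : S.PosDef)
    (q : (Fin d → ℝ) → ℝ) (hq : ∀ x, q x = (S.det)⁻¹ * q₀ (S⁻¹.mulVec x))
    (ℓ : Fin d → ℝ) (hℓ : ℓ ≠ 0) :
    (∫ y in {y : Fin d → ℝ | 0 ≤ ℓ ⬝ᵥ y}, (q y * (ℓ ⬝ᵥ y)) • y)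
        = (∫ y in {y : Fin d → ℝ | 0 ≤ y ⟨0, hd⟩}, (y ⟨0, hd⟩) ^ 2 * q₀ y) •
            ((S * S).mulVec ℓ)
      ∧ 0 < ∫ y in {y : Fin d → ℝ | 0 ≤ y ⟨0, hd⟩}, (y ⟨0, hd⟩) ^ 2 * q₀ y := by
  classical
  set i0 : Fin d := ⟨0, hd⟩ with hi0
  set e0 : Fin d → ℝ := Pi.single i0 1 with he0
  set A₀ : Set (Fin d → ℝ) := {z | 0 ≤ z i0} with hA₀def
  have hA₀ : MeasurableSet A₀ :=
    measurableSet_le measurable_const (measurable_pi_apply i0)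
  set m₂ : ℝ := ∫ z in A₀, (z i0) ^ 2 * q₀ z with hm₂def
  -- basic facts about S
  have hSdet : 0 < S.det := hS.det_pos
  have hST : Sᵀ = S := by
    have := hS.isHermitian.eq
    rwa [Matrix.conjTranspose_eq_transpose_of_trivial] at this
  set w : Fin d → ℝ := S.mulVec ℓ with hw
  have hℓw : 0 < ℓ ⬝ᵥ w := by
    have := hS.dotProduct_mulVec_pos hℓ
    simpa using this
  have hwne : w ≠ 0 := by
    intro h; rw [h] at hℓw; simp at hℓw
  have hww : 0 < w ⬝ᵥ w := by
    obtain ⟨i, hi⟩ := Function.ne_iff.mp hwne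
    refine Finset.sum_pos' (fun j _ => mul_self_nonneg _) ⟨i, Finset.mem_univ i, ?_⟩
    exact mul_self_pos.mpr hi
  set r : ℝ := Real.sqrt (w ⬝ᵥ w) with hr
  have hrpos : 0 < r := Real.sqrt_pos.mpr hww
  have hr2 : r * r = w ⬝ᵥ w := Real.mul_self_sqrt hww.le
  set u : Fin d → ℝ := r⁻¹ • w with hu
  have huu : u ⬝ᵥ u = 1 := by
    rw [hu, smul_dotProduct, dotProduct_smul, smul_eq_mul, smul_eq_mul, ← hr2]
    field_simp
  obtain ⟨U, hU, hUe0⟩ := my_orth i0 u huu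
  have hUTU : Uᵀ * U = 1 := mul_eq_one_comm.mp hU
  have hUdet : U.det * U.det = 1 := by
    have := congrArg Matrix.det hU
    rwa [det_mul, det_transpose, det_one] at this
  have hUdetabs : |U.det| = 1 := by
    rcases mul_self_eq_one_iff.mp hUdet with h | h <;> simp [h]
  set T : Matrix (Fin d) (Fin d) ℝ := S * U with hT
  have hTdet : T.det = S.det * U.det := det_mul S U
  have hTdetne : T.det ≠ 0 := by
    rw [hTdet]
    exact mul_ne_zero hSdet.ne' (fun h => by simp [h] at hUdet)
  have hTdetabs : |T.det| = S.det := by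
    rw [hTdet, abs_mul, hUdetabs, mul_one, abs_of_pos hSdet]
  -- the vector identities
  have hUu : Uᵀ *ᵥ u = e0 := by
    rw [← hUe0, mulVec_mulVec, hUTU, one_mulVec]
  have hTtl : Tᵀ *ᵥ ℓ = r • e0 := by
    have hwu : w = r • u := by
      rw [hu, smul_smul, mul_inv_cancel₀ hrpos.ne', one_smul]
    rw [hT, transpose_mul, hST, ← mulVec_mulVec, ← hw, hwu, mulVec_smul, hUu]
  have hdotT : ∀ z, ℓ ⬝ᵥ T *ᵥ z = r * z i0 := by
    intro z
    rw [dotProduct_mulVec, ← mulVec_transpose, hTtl, smul_dotProduct, he0,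
      single_dotProduct, one_mul, smul_eq_mul]
  have hpre : T.mulVec ⁻¹' {y | 0 ≤ ℓ ⬝ᵥ y} = A₀ := by
    ext z
    simp only [Set.mem_preimage, Set.mem_setOf_eq, hA₀def, hdotT z]
    constructor
    · intro h; exact nonneg_of_mul_nonneg_right h hrpos
    · intro h; exact mul_nonneg hrpos.le h
  -- measurability
  have hmvmeas : ∀ M : Matrix (Fin d) (Fin d) ℝ, Measurable (M.mulVec) := by
    intro M
    have hMe : M.mulVec = ⇑(toLin' M) := funext fun z => (toLin'_apply M z).symm
    rw [hMe]; exact (LinearMap.continuous_on_pi _).measurable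
  have hqm : Measurable q := by
    have : q = fun x => S.det⁻¹ * q₀ (S⁻¹ *ᵥ x) := funext hq
    rw [this]
    exact (hq₀meas.comp (hmvmeas S⁻¹)).const_mul _
  have hdotm : Measurable (fun y : Fin d → ℝ => ℓ ⬝ᵥ y) := by
    have : (fun y : Fin d → ℝ => ℓ ⬝ᵥ y) = fun y => ∑ i, ℓ i * y i := by
      funext y; rfl
    rw [this]
    exact Finset.measurable_sum _ (fun i _ => by fun_prop)
  have hFsm : StronglyMeasurable (fun y : Fin d → ℝ => (q y * (ℓ ⬝ᵥ y)) • y) :=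
    ((hqm.mul hdotm).smul measurable_id).stronglyMeasurable
  -- integrability of g z = (q₀ z * z i0) • z
  set g : (Fin d → ℝ) → (Fin d → ℝ) := fun z => (q₀ z * z i0) • z with hg
  have hgm : Measurable g :=
    ((hq₀meas.mul (measurable_pi_apply i0)).smul measurable_id)
  have hbound : ∀ z : Fin d → ℝ, ‖g z‖ ≤ ‖‖z‖ ^ 2 * q₀ z‖ := by
    intro z
    rw [hg, norm_smul, Real.norm_eq_abs, abs_mul, abs_of_nonneg (hq₀nonneg z)]
    have h1 : |z i0| ≤ ‖z‖ := by
      simpa [Real.norm_eq_abs] using norm_le_pi_norm z i0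
    have h2 : (0:ℝ) ≤ ‖z‖ := norm_nonneg z
    calc q₀ z * |z i0| * ‖z‖ ≤ q₀ z * ‖z‖ * ‖z‖ := by
          apply mul_le_mul_of_nonneg_right _ h2
          exact mul_le_mul_of_nonneg_left h1 (hq₀nonneg z)
      _ = ‖z‖ ^ 2 * q₀ z := by ring
      _ ≤ ‖‖z‖ ^ 2 * q₀ z‖ := le_abs_self _
  have hgint : Integrable g := hmom.mono hgm.aestronglyMeasurable (ae_of_all _ hbound)
  -- integrability of f z = (z i0)^2 * q₀ z
  set f : (Fin d → ℝ) → ℝ := fun z => (z i0) ^ 2 * q₀ z with hf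
  have hfm : Measurable f := ((measurable_pi_apply i0).pow_const 2).mul hq₀meas
  have hfint : Integrable f := by
    refine hmom.mono hfm.aestronglyMeasurable (ae_of_all _ fun z => ?_)
    rw [hf, Real.norm_eq_abs, abs_mul, abs_of_nonneg (hq₀nonneg z), abs_pow, sq_abs]
    have h1 : |z i0| ≤ ‖z‖ := by
      simpa [Real.norm_eq_abs] using norm_le_pi_norm z i0
    have : z i0 ^ 2 ≤ ‖z‖ ^ 2 := by
      have := sq_le_sq' (neg_le_of_abs_le h1) (le_of_abs_le h1)
      simpa using this
    calc z i0 ^ 2 * q₀ z ≤ ‖z‖ ^ 2 * q₀ z :=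
          mul_le_mul_of_nonneg_right this (hq₀nonneg z)
      _ ≤ ‖‖z‖ ^ 2 * q₀ z‖ := le_abs_self _
  -- reflection matrices
  have hD : ∀ k : Fin d,
      ∃ D : Matrix (Fin d) (Fin d) ℝ, D.det ≠ 0 ∧ |D.det| = 1 ∧ D * Dᵀ = 1 ∧
        (∀ z : Fin d → ℝ, ∀ j, (D *ᵥ z) j = (if j = k then -1 else 1) * z j) := by
    intro k
    refine ⟨diagonal (fun j => if j = k then (-1:ℝ) else 1), ?_, ?_, ?_, ?_⟩
    · rw [det_diagonal]
      rw [Finset.prod_ite_eq' Finset.univ k (fun _ => (-1:ℝ))]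
      simp
    · rw [det_diagonal, Finset.prod_ite_eq' Finset.univ k (fun _ => (-1:ℝ))]
      simp
    · rw [diagonal_transpose, diagonal_mul_diagonal]
      ext a b
      by_cases h : a = b
      · subst h
        by_cases h2 : a = k <;> simp [diagonal_apply_eq, one_apply, h2]
      · simp [diagonal_apply_ne _ h, one_apply, h]
    · intro z j
      rw [mulVec_diagonal]
  -- vanishing of off components
  have hzero : ∀ i : Fin d, i ≠ i0 → (∫ z in A₀, (q₀ z * z i0) * z i) = 0 := by
    intro i hi
    obtain ⟨D, hDdet, hDabs, hDorth, hDapp⟩ := hD i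
    set φ : (Fin d → ℝ) → ℝ := fun z => (q₀ z * z i0) * z i with hφ
    have hφm : StronglyMeasurable φ :=
      ((hq₀meas.mul (measurable_pi_apply i0)).mul (measurable_pi_apply i)).stronglyMeasurable
    have hcv := my_cov D hDdet φ hφm A₀ hA₀
    have hDpre : D.mulVec ⁻¹' A₀ = A₀ := by
      ext z
      simp only [Set.mem_preimage, hA₀def, Set.mem_setOf_eq, hDapp z i0]
      have : i0 ≠ i := fun h => hi h.symm
      simp [this]
    have hDcomp : ∀ z, φ (D *ᵥ z) = -φ z := by
      intro z
      rw [hφ]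
      simp only
      rw [hrot D hDorth z, hDapp z i0, hDapp z i]
      have h1 : i0 ≠ i := fun h => hi h.symm
      simp only [if_neg h1, if_pos rfl, if_true]
      ring
    rw [hDpre] at hcv
    have : (∫ z in A₀, φ (D *ᵥ z)) = -∫ z in A₀, φ z := by
      calc (∫ z in A₀, φ (D *ᵥ z)) = ∫ z in A₀, -φ z := by
            congr 1; funext z; exact hDcomp z
        _ = -∫ z in A₀, φ z := integral_neg _
    rw [this, hDabs, one_smul] at hcv
    linarith
  -- the key vector integral
  have hI : (∫ z in A₀, g z) = m₂ • e0 := by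
    have hIint : Integrable g (volume.restrict A₀) := hgint.restrict
    funext i
    have hproj := (ContinuousLinearMap.proj (R := ℝ) (φ := fun _ : Fin d => ℝ) i).integral_comp_comm hIint
    have hcomp : (∫ z in A₀, g z) i = ∫ z in A₀, g z i := by
      simpa using hproj.symm
    by_cases h : i = i0
    · have hgi : (fun z => g z i) = f := by
        funext z
        rw [hg, hf]
        simp only [Pi.smul_apply, smul_eq_mul, h]
        ring
      rw [hcomp, hgi, he0, h]
      simp [hm₂def]
    · have hgi : (fun z => g z i) = fun z => (q₀ z * z i0) * z i := by
        funext z; rw [hg]; simp [Pi.smul_apply, smul_eq_mul]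
      rw [hcomp, hgi, hzero i h, he0]
      simp [Pi.single_apply, h]
  -- main equality
  have hAmeas : MeasurableSet {y : Fin d → ℝ | 0 ≤ ℓ ⬝ᵥ y} :=
    measurableSet_le measurable_const hdotm
  have hSinvT : ∀ z : Fin d → ℝ, S⁻¹ *ᵥ (T *ᵥ z) = U *ᵥ z := by
    intro z
    rw [mulVec_mulVec, hT, ← Matrix.mul_assoc,
      Matrix.nonsing_inv_mul S (isUnit_iff_ne_zero.mpr hSdet.ne'), Matrix.one_mul]
  have hintg : ∀ z : Fin d → ℝ, (q (T *ᵥ z) * (ℓ ⬝ᵥ T *ᵥ z)) • (T *ᵥ z)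
      = (S.det⁻¹ * r) • (T *ᵥ (g z)) := by
    intro z
    rw [hq (T *ᵥ z), hSinvT z, hrot U hU z, hdotT z, hg, mulVec_smul, smul_smul]
    congr 1
    ring
  set Tclm : (Fin d → ℝ) →L[ℝ] (Fin d → ℝ) :=
    LinearMap.toContinuousLinearMap (T.mulVecLin) with hTclm
  have hTclmapp : ∀ v, Tclm v = T *ᵥ v := fun v => rfl
  have hIint : Integrable g (volume.restrict A₀) := hgint.restrict
  have hTe0 : T *ᵥ e0 = r⁻¹ • ((S * S) *ᵥ ℓ) := by
    rw [hT, ← mulVec_mulVec, he0, hUe0, hu, mulVec_smul, hw, mulVec_mulVec]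
  have hmain : (∫ y in {y : Fin d → ℝ | 0 ≤ ℓ ⬝ᵥ y}, (q y * (ℓ ⬝ᵥ y)) • y)
      = m₂ • ((S * S).mulVec ℓ) := by
    rw [my_cov T hTdetne _ hFsm _ hAmeas, hpre]
    calc |T.det| • ∫ z in A₀, (q (T *ᵥ z) * (ℓ ⬝ᵥ T *ᵥ z)) • (T *ᵥ z)
        = |T.det| • ∫ z in A₀, (S.det⁻¹ * r) • (T *ᵥ (g z)) := by
          congr 1; exact setIntegral_congr_fun hA₀ (fun z _ => hintg z)
      _ = |T.det| • (S.det⁻¹ * r) • ∫ z in A₀, T *ᵥ (g z) := by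
          rw [integral_smul]
      _ = |T.det| • (S.det⁻¹ * r) • Tclm (∫ z in A₀, g z) := by
          rw [← Tclm.integral_comp_comm hIint]
          simp only [hTclmapp]
      _ = m₂ • ((S * S).mulVec ℓ) := by
          rw [hI, hTclmapp, mulVec_smul, hTe0, hTdetabs, smul_smul, smul_smul, smul_smul]
          congr 1
          have h1 : S.det ≠ 0 := hSdet.ne'
          have h2 : r ≠ 0 := hrpos.ne'
          field_simp
  -- positivity
  have hm₂nonneg : 0 ≤ m₂ := by
    rw [hm₂def]
    exact setIntegral_nonneg hA₀ (fun z _ => mul_nonneg (sq_nonneg _) (hq₀nonneg z))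
  have hm₂pos : 0 < m₂ := by
    rcases hm₂nonneg.lt_or_eq with h | h
    · exact h
    · exfalso
      have hfnn : (0 : (Fin d → ℝ) → ℝ) ≤ᵐ[volume.restrict A₀] f :=
        ae_of_all _ (fun z => mul_nonneg (sq_nonneg _) (hq₀nonneg z))
      have h1 : f =ᵐ[volume.restrict A₀] 0 :=
        (integral_eq_zero_iff_of_nonneg_ae hfnn hfint.restrict).mp h.symm
      -- the reflected half
      set Am : Set (Fin d → ℝ) := {z | z i0 ≤ 0} with hAmdef
      have hAm : MeasurableSet Am :=
        measurableSet_le (measurable_pi_apply i0) measurable_const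
      obtain ⟨D, hDdet, hDabs, hDorth, hDapp⟩ := hD i0
      have hcv := my_cov D hDdet f hfm.stronglyMeasurable Am hAm
      have hDpre : D.mulVec ⁻¹' Am = A₀ := by
        ext z
        simp only [Set.mem_preimage, hAmdef, hA₀def, Set.mem_setOf_eq, hDapp z i0,
          if_pos rfl, if_true]
        constructor
        · intro hh; nlinarith
        · intro hh; nlinarith
      have hDcomp : ∀ z, f (D *ᵥ z) = f z := by
        intro z
        rw [hf]
        simp only
        rw [hrot D hDorth z, hDapp z i0, if_pos rfl]
        ring
      have h2zero : (∫ z in Am, f z) = 0 := by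
        rw [hcv, hDpre, hDabs, one_smul]
        have : (∫ z in A₀, f (D *ᵥ z)) = ∫ z in A₀, f z := by
          congr 1; funext z; exact hDcomp z
        rw [this, ← hm₂def, ← h]
      have h2 : f =ᵐ[volume.restrict Am] 0 :=
        (integral_eq_zero_iff_of_nonneg_ae
          (ae_of_all _ (fun z => mul_nonneg (sq_nonneg _) (hq₀nonneg z)))
          hfint.restrict).mp h2zero
      have He1 : ∀ᵐ z, z ∈ A₀ → f z = 0 := (ae_restrict_iff' hA₀).mp h1
      have He2 : ∀ᵐ z, z ∈ Am → f z = 0 := (ae_restrict_iff' hAm).mp h2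
      have hnull : volume {z : Fin d → ℝ | z i0 = 0} = 0 := by
        have hker : {z : Fin d → ℝ | z i0 = 0}
            = ((LinearMap.ker (LinearMap.proj i0 : (Fin d → ℝ) →ₗ[ℝ] ℝ)) :
                Set (Fin d → ℝ)) := by
          ext z
          simp [LinearMap.mem_ker]
        rw [hker]
        refine Measure.addHaar_submodule volume _ (fun htop => ?_)
        have hmem : e0 ∈ LinearMap.ker (LinearMap.proj i0 : (Fin d → ℝ) →ₗ[ℝ] ℝ) := by
          rw [htop]; trivial
        rw [LinearMap.mem_ker] at hmem
        simp [he0] at hmem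
      have hane : ∀ᵐ z : Fin d → ℝ, z i0 ≠ 0 := by
        rw [ae_iff]
        convert hnull using 2
        simp
      have hq0 : ∀ᵐ z : Fin d → ℝ, q₀ z = 0 := by
        filter_upwards [He1, He2, hane] with z hz1 hz2 hz3
        have hfz : f z = 0 := by
          rcases le_total 0 (z i0) with hle | hle
          · exact hz1 hle
          · exact hz2 hle
        rw [hf] at hfz
        simp only at hfz
        rcases mul_eq_zero.mp hfz with hh | hh
        · exact absurd ((pow_eq_zero_iff two_ne_zero).mp hh) hz3
        · exact hh
      have : (∫ y, q₀ y) = 0 := by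
        rw [integral_eq_zero_of_ae hq0]
      rw [hq₀int] at this
      norm_num at this
  exact ⟨hmain, hm₂pos⟩
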